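/- arXiv:2303.04461 — 8 statements merged into one kernel-verified Lean document; each statement's English description precedes it below -/
import Mathlib

section
/- If A is an evolution algebra over a field K with natural basis B = {e_i}, E its associated directed graph, and H is a hereditary subset of E^0, then the subspace I_H = span(H) is an ideal of A. -/
variable {K ι A : Type*}

section Defs
variable [Field K] [NonUnitalNonAssocCommRing A] [Module K A]
  [SMulCommClass K A A] [IsScalarTower K A A]

/-- A natural basis: distinct basis elements multiply to zero. -/
def IsNaturalBasis (b : Module.Basis ι K A) : Prop := ∀ i j : ι, i ≠ j → b i * b j = 0

/-- Edge i → j in the associated graph: the j-th coordinate of (b i)² is nonzero. -/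
def EvolEdge (b : Module.Basis ι K A) (i j : ι) : Prop := b.repr (b i * b i) j ≠ 0

/-- Hereditary subset of vertices: closed under edges (hence under reachability). -/
def EvolHereditary (b : Module.Basis ι K A) (H : Set ι) : Prop :=
  ∀ i ∈ H, ∀ j, EvolEdge b i j → j ∈ H

/-- Saturated subset: a regular vertex all of whose edge-targets lie in H belongs to H. -/
def EvolSaturated (b : Module.Basis ι K A) (H : Set ι) : Prop :=
  ∀ i : ι, b i * b i ≠ 0 → (∀ j, EvolEdge b i j → j ∈ H) → i ∈ H

/-- Ideal of a (nonunital, nonassociative, commutative) algebra: a submodule absorbing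
multiplication. -/
def IsEvolIdeal (I : Submodule K A) : Prop := ∀ a : A, ∀ x ∈ I, a * x ∈ I

/-- I_H, the span of the basis elements indexed by H. -/
def idealOf (b : Module.Basis ι K A) (H : Set ι) : Submodule K A := Submodule.span K (b '' H)

/-- H_I = {e ∈ B : e² ∈ I}. -/
def hSet (b : Module.Basis ι K A) (I : Submodule K A) : Set ι := {i | b i * b i ∈ I}

/-- Maximal ideal. -/
def IsMaxIdeal (I : Submodule K A) : Prop :=
  IsEvolIdeal I ∧ I ≠ ⊤ ∧
    ∀ J : Submodule K A, IsEvolIdeal J → I ≤ J → J = I ∨ J = ⊤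

/-- Absorption property of an ideal. -/
def Absorption (I : Submodule K A) : Prop := ∀ x : A, (∀ a : A, x * a ∈ I) → x ∈ I

end Defs

/-- A², the span of all products. -/
def sqIdeal (K A : Type*) [Field K] [NonUnitalNonAssocCommRing A] [Module K A] :
    Submodule K A :=
  Submodule.span K {x : A | ∃ a c : A, x = a * c}

variable [Field K] [NonUnitalNonAssocCommRing A] [Module K A]
  [SMulCommClass K A A] [IsScalarTower K A A]

theorem stmt0 (b : Module.Basis ι K A) (hb : IsNaturalBasis b) (H : Set ι)
    (hH : EvolHereditary b H) : IsEvolIdeal (idealOf b H) := by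
  have hsq : ∀ i ∈ H, b i * b i ∈ idealOf b H := by
    intro i hi
    have : b i * b i = (b.repr (b i * b i)).sum fun j c => c • b j := by
      conv_lhs => rw [← b.linearCombination_repr (b i * b i)]
      rfl
    rw [this]
    refine Submodule.sum_mem _ fun j hj => Submodule.smul_mem _ _ ?_
    have hjH : j ∈ H := hH i hi j (Finsupp.mem_support_iff.mp hj)
    exact Submodule.subset_span ⟨j, hjH, rfl⟩
  have hmul : ∀ a : A, ∀ i ∈ H, a * b i ∈ idealOf b H := by
    intro a i hi
    have ha : a ∈ Submodule.span K (Set.range b) := b.mem_span a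
    induction ha using Submodule.span_induction with
    | mem x hx =>
        obtain ⟨j, rfl⟩ := hx
        rcases eq_or_ne j i with rfl | hne
        · exact hsq j hi
        · rw [hb j i hne]; exact Submodule.zero_mem _
    | zero => rw [zero_mul]; exact Submodule.zero_mem _
    | add x y _ _ hx hy => rw [add_mul]; exact Submodule.add_mem _ hx hy
    | smul c x _ hx => rw [smul_mul_assoc]; exact Submodule.smul_mem _ _ hx
  intro a x hx
  induction hx using Submodule.span_induction with
  | mem x hx =>
      obtain ⟨i, hi, rfl⟩ := hx
      exact hmul a i hi
  | zero => rw [mul_zero]; exact Submodule.zero_mem _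
  | add x y _ _ hx hy => rw [mul_add]; exact Submodule.add_mem _ hx hy
  | smul c x _ hx => rw [mul_smul_comm]; exact Submodule.smul_mem _ _ hx
end

section
/- If A is an evolution algebra with natural basis B and associated graph E, and I is an ideal of A, then the set H_I := {e_i ∈ B : e_i^2 ∈ I} is a hereditary subset of E^0. -/
variable {K ι A : Type*}

variable [Field K] [NonUnitalNonAssocCommRing A] [Module K A]
  [SMulCommClass K A A] [IsScalarTower K A A]

theorem stmt1 (b : Module.Basis ι K A) (hb : IsNaturalBasis b) (I : Submodule K A)
    (hI : IsEvolIdeal I) : EvolHereditary b (hSet b I) := by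
  intro i hi j hj
  have hmem : b j * (b i * b i) ∈ I := hI _ _ hi
  have hkey : b j * (b i * b i) = b.repr (b i * b i) j • (b j * b j) := by
    conv_lhs => rw [← b.linearCombination_repr (b i * b i)]
    rw [Finsupp.linearCombination_apply, Finsupp.mul_sum, Finsupp.sum]
    rw [Finset.sum_eq_single j]
    · rw [mul_smul_comm]
    · intro k _ hkj
      rw [mul_smul_comm, hb j k (Ne.symm hkj), smul_zero]
    · intro hjn
      rw [Finsupp.notMem_support_iff.mp hjn, zero_smul, mul_zero]
  rw [hkey] at hmem
  have := I.smul_mem (b.repr (b i * b i) j)⁻¹ hmem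
  rwa [inv_smul_smul₀ hj] at this
end

section
/- Let A be an evolution algebra with natural basis B and I an ideal of A. If H_I = I ∩ B, then H_I is a saturated subset of the vertex set of the associated graph. -/
variable {K ι A : Type*}

variable [Field K] [NonUnitalNonAssocCommRing A] [Module K A]
  [SMulCommClass K A A] [IsScalarTower K A A]

theorem stmt7 (b : Module.Basis ι K A) (hb : IsNaturalBasis b) (I : Submodule K A)
    (hI : IsEvolIdeal I) (h : hSet b I = {i : ι | b i ∈ I}) :
    EvolSaturated b (hSet b I) := by
  intro i _ hj
  show b i * b i ∈ I
  rw [← b.linearCombination_repr (b i * b i), Finsupp.linearCombination_apply,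
    Finsupp.sum]
  refine Submodule.sum_mem I fun j hjmem => Submodule.smul_mem I _ ?_
  have hedge : EvolEdge b i j := Finsupp.mem_support_iff.mp hjmem
  have := hj j hedge
  rw [h] at this
  exact this
end

section
/- Let A be an evolution algebra with natural basis B and I a maximal ideal of A such that A² is not contained in I. Then I = I_{H_I}. -/
variable {K ι A : Type*}

variable [Field K] [NonUnitalNonAssocCommRing A] [Module K A]
  [SMulCommClass K A A] [IsScalarTower K A A]


lemma basis_mul_aux (b : Module.Basis ι K A) (hb : IsNaturalBasis b) (i : ι) (x : A) :
    b i * x = b.repr x i • (b i * b i) := by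
  nth_rewrite 1 [← b.linearCombination_repr x]
  rw [Finsupp.linearCombination_apply, Finsupp.mul_sum]
  rw [Finsupp.sum_eq_single i (fun j _ hj => by
        rw [mul_smul_comm, hb i j (Ne.symm hj), smul_zero])
      (fun _ => by rw [zero_smul, mul_zero])]
  rw [mul_smul_comm]

theorem stmt9 (b : Module.Basis ι K A) (hb : IsNaturalBasis b) (I : Submodule K A)
    (hI : IsMaxIdeal I) (hsq : ¬ sqIdeal K A ≤ I) :
    I = idealOf b (hSet b I) := by
  have hsq_mem : ∀ x ∈ I, ∀ i : ι, b.repr x i ≠ 0 → b i * b i ∈ I := by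
    intro x hx i hi
    have h := hI.1 (b i) x hx
    rw [basis_mul_aux b hb] at h
    have h2 := I.smul_mem (b.repr x i)⁻¹ h
    rwa [smul_smul, inv_mul_cancel₀ hi, one_smul] at h2
  have hle : I ≤ idealOf b (hSet b I) := by
    intro x hx
    rw [idealOf, Module.Basis.mem_span_image]
    intro i hi
    exact hsq_mem x hx i (Finsupp.mem_support_iff.mp hi)
  have hidl : IsEvolIdeal (idealOf b (hSet b I)) := by
    intro a x hx
    have hcl : idealOf b (hSet b I) ≤
        Submodule.comap (LinearMap.mulLeft K a) (idealOf b (hSet b I)) := by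
      rw [idealOf, Submodule.span_le]
      rintro _ ⟨i, hi, rfl⟩
      show a * b i ∈ idealOf b (hSet b I)
      have heq : a * b i = b.repr a i • (b i * b i) := by rw [mul_comm, basis_mul_aux b hb]
      rw [heq]
      exact hle (I.smul_mem _ hi)
    exact hcl hx
  rcases hI.2.2 _ hidl hle with h | h
  · exact h.symm
  · exfalso; apply hsq
    rw [sqIdeal, Submodule.span_le]
    rintro _ ⟨a, c, rfl⟩
    have ha : a ∈ idealOf b (hSet b I) := h ▸ Submodule.mem_top
    have hcl : idealOf b (hSet b I) ≤ Submodule.comap (LinearMap.mulRight K c) I := by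
      rw [idealOf, Submodule.span_le]
      rintro _ ⟨i, hi, rfl⟩
      show b i * c ∈ I
      rw [basis_mul_aux b hb i c]
      exact I.smul_mem _ hi
    exact hcl ha
end

section
/- Let A be a perfect evolution algebra (A² = A). If I is a maximal ideal of A, then there exists a maximal hereditary subset H of the vertex set of the associated graph such that I = I_H; moreover H = H_I. -/
variable {K ι A : Type*}

variable [Field K] [NonUnitalNonAssocCommRing A] [Module K A]
  [SMulCommClass K A A] [IsScalarTower K A A]

section Aux
variable [Field K] [NonUnitalNonAssocCommRing A] [Module K A]
  [SMulCommClass K A A] [IsScalarTower K A A]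

lemma mul_basis_eq (b : Module.Basis ι K A) (hb : IsNaturalBasis b) (a : A) (i : ι) :
    a * b i = b.repr a i • (b i * b i) := by
  have : (LinearMap.mulRight K (b i)) a
      = (LinearMap.smulRight (b.coord i) (b i * b i)) a := by
    refine LinearMap.congr_fun (b.ext fun j => ?_) a
    by_cases h : j = i
    · subst h
      simp [Module.Basis.coord_apply, Module.Basis.repr_self]
    · simp [hb j i h, Module.Basis.coord_apply, Module.Basis.repr_self_apply, h]
  simpa using this

lemma sq_mem_span (b : Module.Basis ι K A) {H : Set ι} (hH : EvolHereditary b H)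
    {i : ι} (hi : i ∈ H) : b i * b i ∈ Submodule.span K (b '' H) := by
  rw [Module.Basis.mem_span_image]
  intro j hj
  exact hH i hi j (by simpa [EvolEdge] using hj)

lemma idealOf_isIdeal (b : Module.Basis ι K A) (hb : IsNaturalBasis b) {H : Set ι}
    (hH : EvolHereditary b H) : IsEvolIdeal (idealOf b H) := by
  intro a x hx
  refine Submodule.span_induction ?_ ?_ ?_ ?_ hx
  · rintro _ ⟨i, hi, rfl⟩
    rw [mul_basis_eq b hb a i]
    exact Submodule.smul_mem _ _ (sq_mem_span b hH hi)
  · simp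
  · intro x y _ _ hx hy
    rw [mul_add]; exact Submodule.add_mem _ hx hy
  · intro c x _ hx
    rw [mul_smul_comm]; exact Submodule.smul_mem _ _ hx
end Aux

theorem stmt11 (b : Module.Basis ι K A) (hb : IsNaturalBasis b)
    (hperf : sqIdeal K A = ⊤) (I : Submodule K A) (hI : IsMaxIdeal I) :
    ∃ H : Set ι, EvolHereditary b H ∧ H ≠ Set.univ ∧
      (∀ H' : Set ι, EvolHereditary b H' → H ⊆ H' → H' = H ∨ H' = Set.univ) ∧
      I = idealOf b H ∧ H = hSet b I := by
  obtain ⟨hId, hne, hmax⟩ := hI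
  set H : Set ι := hSet b I with hH
  -- any x ∈ I with nonzero i-th coordinate forces i ∈ H; more precisely:
  have key : ∀ x ∈ I, ∀ i : ι, b.repr x i ≠ 0 → b i * b i ∈ I := by
    intro x hx i hxi
    have h1 : b i * x ∈ I := hId _ _ hx
    rw [mul_comm, mul_basis_eq b hb x i] at h1
    have := Submodule.smul_mem I (b.repr x i)⁻¹ h1
    rwa [smul_smul, inv_mul_cancel₀ hxi, one_smul] at this
  -- H is hereditary
  have hHer : EvolHereditary b H := by
    intro i hi j hij
    exact key _ hi j hij
  -- I ≤ idealOf b H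
  have hIle : I ≤ idealOf b H := by
    intro x hx
    rw [idealOf, Module.Basis.mem_span_image]
    intro i hi
    exact key x hx i (by simpa using hi)
  -- idealOf b H ≤ I
  have hleI : idealOf b H ≤ I := by
    rw [idealOf, Submodule.span_le]
    rintro _ ⟨i, hi, rfl⟩
    by_contra hbi
    set J : Submodule K A := I ⊔ Submodule.span K {b i} with hJ
    have habs : ∀ a : A, ∀ x ∈ J, a * x ∈ I := by
      intro a x hx
      obtain ⟨y, hy, z, hz, rfl⟩ := Submodule.mem_sup.mp hx
      obtain ⟨d, rfl⟩ := Submodule.mem_span_singleton.mp hz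
      rw [mul_add, mul_smul_comm, mul_basis_eq b hb a i]
      exact Submodule.add_mem _ (hId _ _ hy)
        (Submodule.smul_mem _ _ (Submodule.smul_mem _ _ hi))
    have hJid : IsEvolIdeal J := fun a x hx => Submodule.mem_sup_left (habs a x hx)
    rcases hmax J hJid le_sup_left with h | h
    · exact hbi (h ▸ Submodule.mem_sup_right (Submodule.mem_span_singleton_self _))
    · apply hne
      refine le_antisymm le_top ?_
      rw [← hperf, sqIdeal, Submodule.span_le]
      rintro _ ⟨a, c, rfl⟩
      exact habs a c (h ▸ Submodule.mem_top)
  have hIeq : I = idealOf b H := le_antisymm hIle hleI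
  refine ⟨H, hHer, ?_, ?_, hIeq, rfl⟩
  · intro huniv
    apply hne
    rw [hIeq, huniv, idealOf, Set.image_univ, b.span_eq]
  · intro H' hH' hsub
    set J : Submodule K A := idealOf b H' with hJ
    have hJid : IsEvolIdeal J := idealOf_isIdeal b hb hH'
    have hIJ : I ≤ J := hIeq ▸ Submodule.span_mono (Set.image_mono hsub)
    rcases hmax J hJid hIJ with h | h
    · left
      refine le_antisymm ?_ hsub
      intro i hi
      have : b i ∈ I := h ▸ Submodule.subset_span ⟨i, hi, rfl⟩
      exact hId _ _ this
    · right
      ext i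
      simp only [Set.mem_univ, iff_true]
      have : b i ∈ J := h ▸ Submodule.mem_top
      rw [hJ, idealOf, Module.Basis.mem_span_image] at this
      exact this (by simp)
end

section
/- If A is an evolution algebra over K that is finitely generated as a K-algebra, then the vertex set E^0 of its associated directed graph equals the hereditary closure of some finite subset of E^0. -/
variable {K ι A : Type*}

variable [Field K] [NonUnitalNonAssocCommRing A] [Module K A]
  [SMulCommClass K A A] [IsScalarTower K A A]

theorem stmt14 (b : Module.Basis ι K A) (hb : IsNaturalBasis b)
    (hfg : ∃ s : Finset A, NonUnitalAlgebra.adjoin K (s : Set A) = ⊤) :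
    ∃ S : Finset ι, ∀ i : ι, ∃ s ∈ S, Relation.ReflTransGen (EvolEdge b) s i := by
  classical
  obtain ⟨s, hs⟩ := hfg
  set S : Finset ι := s.biUnion (fun g => (b.repr g).support) with hS
  refine ⟨S, fun i => ?_⟩
  set R : Set ι := {j | ∃ t ∈ S, Relation.ReflTransGen (EvolEdge b) t j} with hR
  -- R is hereditary
  have hher : ∀ i ∈ R, ∀ j, EvolEdge b i j → j ∈ R := by
    rintro i ⟨t, ht, hrt⟩ j hij
    exact ⟨t, ht, hrt.tail hij⟩
  -- span (b '' R) is closed under multiplication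
  have hmul : ∀ x y : A, x ∈ Submodule.span K (b '' R) → y ∈ Submodule.span K (b '' R) →
      x * y ∈ Submodule.span K (b '' R) := by
    intro x y hx hy
    induction hx using Submodule.span_induction with
    | mem x hxm =>
      induction hy using Submodule.span_induction with
      | mem y hym =>
        obtain ⟨i, hi, rfl⟩ := hxm
        obtain ⟨j, hj, rfl⟩ := hym
        rcases eq_or_ne i j with rfl | hne
        · rw [b.mem_span_image]
          intro k hk
          exact hher i hi k (by simpa [EvolEdge] using hk)
        · rw [hb i j hne]; exact Submodule.zero_mem _
      | zero => rw [mul_zero]; exact Submodule.zero_mem _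
      | add y z hy hz ihy ihz => rw [mul_add]; exact Submodule.add_mem _ ihy ihz
      | smul c y hy ih => rw [mul_smul_comm]; exact Submodule.smul_mem _ _ ih
    | zero => rw [zero_mul]; exact Submodule.zero_mem _
    | add x z hx hz ihx ihz => rw [add_mul]; exact Submodule.add_mem _ ihx ihz
    | smul c x hx ih => rw [smul_mul_assoc]; exact Submodule.smul_mem _ _ ih
  -- generators lie in the span
  have hgen : (s : Set A) ⊆ Submodule.span K (b '' R) := by
    intro g hg
    rw [SetLike.mem_coe, b.mem_span_image]
    intro k hk
    exact ⟨k, Finset.mem_biUnion.2 ⟨g, hg, hk⟩, Relation.ReflTransGen.refl⟩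
  -- everything lies in the span
  have htop : ∀ x : A, x ∈ Submodule.span K (b '' R) := by
    intro x
    have hx : x ∈ NonUnitalAlgebra.adjoin K (s : Set A) := by rw [hs]; trivial
    induction hx using NonUnitalAlgebra.adjoin_induction with
    | mem x hx => exact hgen hx
    | add x y _ _ ihx ihy => exact Submodule.add_mem _ ihx ihy
    | zero => exact Submodule.zero_mem _
    | mul x y _ _ ihx ihy => exact hmul x y ihx ihy
    | smul c x _ ih => exact Submodule.smul_mem _ _ ih
  have := (b.mem_span_image).1 (htop (b i))
  have hi : i ∈ R := this (by simp)
  exact hi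
end

section
/- Let A be a commutative algebra over a field K and I a maximal ideal of A such that either dim(A/I) ≠ 1 or A² ⊄ I. Then I has the absorption property: xA ⊆ I implies x ∈ I. -/
variable {K ι A : Type*}

variable [Field K] [NonUnitalNonAssocCommRing A] [Module K A]
  [SMulCommClass K A A] [IsScalarTower K A A]

theorem stmt15 (I : Submodule K A) (hI : IsMaxIdeal I)
    (hside : Module.rank K (A ⧸ I) ≠ 1 ∨ ¬ sqIdeal K A ≤ I) :
    Absorption I := by
  intro x hx
  set J : Submodule K A := I ⊔ Submodule.span K {x} with hJ
  have hxJ : x ∈ J := Submodule.mem_sup_right (Submodule.mem_span_singleton_self x)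
  have hJideal : IsEvolIdeal J := by
    intro a y hy
    rw [hJ, Submodule.mem_sup] at hy
    obtain ⟨i, hi, z, hz, rfl⟩ := hy
    obtain ⟨c, rfl⟩ := Submodule.mem_span_singleton.mp hz
    have h1 : a * i ∈ I := hI.1 a i hi
    have h2 : a * (c • x) ∈ I := by
      rw [mul_smul_comm, mul_comm]
      exact I.smul_mem c (hx a)
    rw [mul_add]
    exact Submodule.mem_sup_left (I.add_mem h1 h2)
  rcases hI.2.2 J hJideal le_sup_left with h | h
  · exact h ▸ hxJ
  · -- J = ⊤: derive contradiction with hside, unless x ∈ I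
    by_contra hxI
    have htop : ∀ a : A, ∃ i ∈ I, ∃ c : K, a = i + c • x := by
      intro a
      have : a ∈ J := h ▸ Submodule.mem_top
      rw [hJ, Submodule.mem_sup] at this
      obtain ⟨i, hi, z, hz, rfl⟩ := this
      obtain ⟨c, rfl⟩ := Submodule.mem_span_singleton.mp hz
      exact ⟨i, hi, c, rfl⟩
    have hsq : sqIdeal K A ≤ I := by
      rw [sqIdeal, Submodule.span_le]
      rintro _ ⟨a, c, rfl⟩
      obtain ⟨i, hi, k, rfl⟩ := htop c
      have h1 : a * i ∈ I := hI.1 a i hi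
      have h2 : a * (k • x) ∈ I := by
        rw [mul_smul_comm, mul_comm]
        exact I.smul_mem k (hx a)
      rw [mul_add]; exact I.add_mem h1 h2
    have hrank : Module.rank K (A ⧸ I) = 1 := by
      apply rank_eq_one (Submodule.Quotient.mk x)
      · simpa [Submodule.Quotient.mk_eq_zero] using hxI
      · intro w
        obtain ⟨a, rfl⟩ := Submodule.Quotient.mk_surjective I w
        obtain ⟨i, hi, c, rfl⟩ := htop a
        exact ⟨c, by simp [Submodule.Quotient.mk_add, (Submodule.Quotient.mk_eq_zero I).mpr hi]⟩
    rcases hside with h' | h'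
    · exact h' hrank
    · exact h' hsq
end

section
/- Let A be a finite-dimensional perfect evolution algebra (A² = A) and I an ideal of A. Then I = I_{H_I} (so dim I = |H_I| and I is spanned by the basis elements whose squares lie in I), and consequently I has the absorption property. -/
variable {K ι A : Type*}

section Aux
variable [Field K] [NonUnitalNonAssocCommRing A] [Module K A]
  [SMulCommClass K A A] [IsScalarTower K A A]

lemma aux_mul_basis [Fintype ι] (b : Module.Basis ι K A) (hb : IsNaturalBasis b) (a : A) (i : ι) :
    a * b i = b.repr a i • (b i * b i) := by
  conv_lhs => rw [← b.sum_repr a]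
  rw [Finset.sum_mul, Finset.sum_eq_single i]
  · rw [smul_mul_assoc]
  · intro j _ hj
    rw [smul_mul_assoc, hb j i hj, smul_zero]
  · intro h
    simp at h

lemma aux_mul_mem [Fintype ι] (b : Module.Basis ι K A) (hb : IsNaturalBasis b) (a c : A) :
    a * c ∈ Submodule.span K (Set.range fun j => b j * b j) := by
  have h : a * c = ∑ j, b.repr c j • (a * b j) := by
    conv_lhs => rw [← b.sum_repr c]
    rw [Finset.mul_sum]
    simp [mul_smul_comm]
  rw [h]
  refine Submodule.sum_mem _ fun j _ => Submodule.smul_mem _ _ ?_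
  rw [aux_mul_basis b hb]
  exact Submodule.smul_mem _ _ (Submodule.subset_span ⟨j, rfl⟩)

lemma aux_sq_span [Fintype ι] (b : Module.Basis ι K A) (hb : IsNaturalBasis b) :
    sqIdeal K A = Submodule.span K (Set.range fun j => b j * b j) := by
  apply le_antisymm
  · rw [sqIdeal, Submodule.span_le]
    rintro x ⟨a, c, rfl⟩
    exact aux_mul_mem b hb a c
  · rw [Submodule.span_le]
    rintro x ⟨j, rfl⟩
    exact Submodule.subset_span ⟨b j, b j, rfl⟩

end Aux

variable [Field K] [NonUnitalNonAssocCommRing A] [Module K A]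
  [SMulCommClass K A A] [IsScalarTower K A A]

theorem stmt18 [FiniteDimensional K A] (b : Module.Basis ι K A) (hb : IsNaturalBasis b)
    (hperf : sqIdeal K A = ⊤) (I : Submodule K A) (hI : IsEvolIdeal I) :
    I = idealOf b (hSet b I) ∧ Absorption I := by
  classical
  have : Fintype ι := FiniteDimensional.fintypeBasisIndex b
  set S := hSet b I with hS
  have hmemS : ∀ x ∈ I, ∀ j, b.repr x j ≠ 0 → j ∈ S := by
    intro x hx j hj
    have h1 : x * b j ∈ I := by rw [mul_comm]; exact hI _ _ hx
    rw [aux_mul_basis b hb] at h1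
    have h2 := I.smul_mem (b.repr x j)⁻¹ h1
    rwa [smul_smul, inv_mul_cancel₀ hj, one_smul] at h2
  have hIle : I ≤ idealOf b S := by
    intro x hx
    rw [idealOf, Module.Basis.mem_span_image]
    intro j hj
    rw [Finset.mem_coe, Finsupp.mem_support_iff] at hj
    exact hmemS x hx j hj
  have hspan : ⊤ ≤ Submodule.span K (Set.range fun j => b j * b j) := by
    rw [← aux_sq_span b hb, hperf]
  have li : LinearIndependent K (fun j => b j * b j) :=
    linearIndependent_of_top_le_span_of_card_eq_finrank hspan
      (Module.finrank_eq_card_basis b).symm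
  have hS2I : Submodule.span K ((fun j => b j * b j) '' S) ≤ I := by
    rw [Submodule.span_le]
    rintro x ⟨j, hj, rfl⟩
    exact hj
  have fS : Fintype ↥S := Set.Finite.fintype (Set.toFinite S)
  have h1 : Module.finrank K (idealOf b S) = Fintype.card S := by
    rw [idealOf, Set.image_eq_range]
    exact finrank_span_eq_card (b.linearIndependent.comp _ Subtype.val_injective)
  have h2 : Module.finrank K (Submodule.span K ((fun j => b j * b j) '' S))
      = Fintype.card S := by
    rw [Set.image_eq_range]
    exact finrank_span_eq_card (li.comp _ Subtype.val_injective)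
  have heq : Submodule.span K ((fun j => b j * b j) '' S) = idealOf b S :=
    Submodule.eq_of_le_of_finrank_le (hS2I.trans hIle) (by rw [h1, h2])
  have hmain : I = idealOf b S := le_antisymm hIle (heq ▸ hS2I)
  refine ⟨hmain, fun x hx => ?_⟩
  rw [hmain, idealOf, Module.Basis.mem_span_image]
  intro j hj
  rw [Finset.mem_coe, Finsupp.mem_support_iff] at hj
  have h1 : x * b j ∈ I := hx (b j)
  rw [aux_mul_basis b hb] at h1
  have h2 := I.smul_mem (b.repr x j)⁻¹ h1
  rwa [smul_smul, inv_mul_cancel₀ hj, one_smul] at h2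
end
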